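/- Completeness of the almost-sure algorithm: every state outside the final fixed point X* is not almost-surely winning — for any strategy of the controller from v ∉ X*, there exist transition probabilities consistent with the supports (indeed, any such probabilities) under which the probability of reaching F is strictly less than 1. -/

import Mathlib

noncomputable section

/-- A one-player stochastic game (MDP with positive-support semantics):
states are partitioned into controlled states (`isC v = true`, where the controller
picks an action with a deterministic transition) and probabilistic states
(`isC v = false`, where a successor in the known support `supp v` is chosen at random
with some positive probability). -/
structure OneMDP (V A : Type) where
  isC : V → Bool
  trans : V → A → Option V
  supp : V → Set V

namespace OneMDP

variable {V A : Type}

/-- `Pre(Y, X)`: states in `X` from which the controller can ensure to move into `Y` with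
positive probability while staying in `X` with probability one: controlled states with
some action leading into `Y`, and probabilistic states all of whose support-successors
lie in `X` with at least one in `Y`. -/
def Pre (M : OneMDP V A) (Y X : Set V) : Set V :=
  X ∩ ({v | M.isC v = true ∧ ∃ a v', M.trans v a = some v' ∧ v' ∈ Y} ∪
       {v | M.isC v = false ∧ M.supp v ⊆ X ∧ (M.supp v ∩ Y).Nonempty})

/-- The inner iteration: `Y 0 = F`, `Y (i+1) = Y i ∪ Pre(Y i, X)`. -/
def Yseq (M : OneMDP V A) (F X : Set V) : ℕ → Set V
  | 0 => F
  | i + 1 => Yseq M F X i ∪ M.Pre (Yseq M F X i) X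

/-- The inner least fixed point (reached after `|V|` iterations). -/
def innerFix [Fintype V] (M : OneMDP V A) (F X : Set V) : Set V :=
  Yseq M F X (Fintype.card V)

/-- The outer iteration: `X 0 = V`, `X (k+1) = lfp Y` of the inner iteration with
parameter `X k`. -/
def Xseq [Fintype V] (M : OneMDP V A) (F : Set V) : ℕ → Set V
  | 0 => Set.univ
  | k + 1 => M.innerFix F (Xseq M F k)

/-- The final outer fixed point `X*`. -/
def Xstar [Fintype V] (M : OneMDP V A) (F : Set V) : Set V :=
  Xseq M F (Fintype.card V)

/-- `p` is a valid assignment of transition probabilities for the probabilistic states: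
at each probabilistic state it is a probability distribution positive exactly on the
known support. -/
def ValidProbs [Fintype V] (M : OneMDP V A) (p : V → V → ℝ) : Prop :=
  ∀ v, M.isC v = false →
    (∀ v', (0 < p v v' ↔ v' ∈ M.supp v)) ∧ (∀ v', 0 ≤ p v v') ∧ ∑ v' : V, p v v' = 1

/-- Probability of reaching `F` within `n` steps under a memoryless controller strategy
`σ` and probabilities `p` at probabilistic states (`F` is absorbing by construction). -/
def mreach [Fintype V] (M : OneMDP V A) (p : V → V → ℝ) (σ : V → A) (F : Set V)
    [DecidablePred (· ∈ F)] : ℕ → V → ℝ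
  | 0, v => if v ∈ F then 1 else 0
  | n + 1, v =>
      if v ∈ F then 1
      else if M.isC v then (M.trans v (σ v)).elim 0 (mreach M p σ F n)
      else ∑ v' : V, p v v' * mreach M p σ F n v'

/-- Probability of reaching `F` within `n` steps under a history-dependent controller
strategy `σ`, from history `h` and current state `v`. -/
def hreach [Fintype V] (M : OneMDP V A) (p : V → V → ℝ) (σ : List V → A) (F : Set V)
    [DecidablePred (· ∈ F)] : ℕ → List V → V → ℝ
  | 0, _, v => if v ∈ F then 1 else 0
  | n + 1, h, v =>
      if v ∈ F then 1
      else if M.isC v then (M.trans v (σ (h ++ [v]))).elim 0 (hreach M p σ F n (h ++ [v]))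
      else ∑ v' : V, p v v' * hreach M p σ F n (h ++ [v]) v'

end OneMDP

namespace OneMDP

variable {V A : Type}

lemma Yseq_subset_succ (M : OneMDP V A) (F X : Set V) (i : ℕ) :
    M.Yseq F X i ⊆ M.Yseq F X (i + 1) := Set.subset_union_left

lemma F_subset_Yseq (M : OneMDP V A) (F X : Set V) (i : ℕ) :
    F ⊆ M.Yseq F X i := by
  induction i with
  | zero => exact subset_rfl
  | succ i ih => exact ih.trans (Yseq_subset_succ M F X i)

lemma Yseq_stationary (M : OneMDP V A) (F X : Set V) {i : ℕ}
    (h : M.Yseq F X i = M.Yseq F X (i + 1)) :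
    ∀ j, M.Yseq F X (i + j) = M.Yseq F X i := by
  intro j
  induction j with
  | zero => rfl
  | succ j ih =>
    calc M.Yseq F X (i + (j+1)) = M.Yseq F X (i+j) ∪ M.Pre (M.Yseq F X (i+j)) X := rfl
      _ = M.Yseq F X i ∪ M.Pre (M.Yseq F X i) X := by rw [ih]
      _ = M.Yseq F X (i+1) := rfl
      _ = M.Yseq F X i := h.symm

lemma Yseq_card_stab [Fintype V] (M : OneMDP V A) (F X : Set V) :
    M.Yseq F X (Fintype.card V) = M.Yseq F X (Fintype.card V + 1) := by
  by_contra hne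
  have hstrict : ∀ i ≤ Fintype.card V, M.Yseq F X i ≠ M.Yseq F X (i + 1) := by
    intro i hi h
    apply hne
    have h1 := Yseq_stationary M F X h (Fintype.card V - i)
    have h2 := Yseq_stationary M F X h (Fintype.card V + 1 - i)
    rw [Nat.add_sub_cancel' hi] at h1
    rw [Nat.add_sub_cancel' (le_trans hi (Nat.le_succ _))] at h2
    rw [h1, h2]
  have hcard : ∀ i, i ≤ Fintype.card V + 1 → i ≤ (M.Yseq F X i).ncard := by
    intro i
    induction i with
    | zero => intro _; exact Nat.zero_le _
    | succ i ih =>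
      intro hi
      have hlt : (M.Yseq F X i).ncard < (M.Yseq F X (i+1)).ncard :=
        Set.ncard_lt_ncard (HasSubset.Subset.ssubset_of_ne (Yseq_subset_succ M F X i)
          (hstrict i (Nat.lt_succ_iff.mp hi))) (Set.toFinite _)
      exact Nat.lt_of_le_of_lt (ih (le_trans (Nat.le_succ i) hi)) hlt
  have h1 := hcard (Fintype.card V + 1) le_rfl
  have hle : (M.Yseq F X (Fintype.card V + 1)).ncard ≤ Fintype.card V := by
    simpa [Set.ncard_univ, Nat.card_eq_fintype_card] using
      Set.ncard_le_ncard (Set.subset_univ (M.Yseq F X (Fintype.card V + 1))) Set.finite_univ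
  omega

lemma not_mem_facts [Fintype V] (M : OneMDP V A) (F : Set V) (k : ℕ) (v : V)
    (hvk : v ∈ M.Xseq F k) (hv : v ∉ M.Xseq F (k+1)) :
    v ∉ F ∧
    (M.isC v = true → ∀ a v', M.trans v a = some v' → v' ∉ M.Xseq F (k+1)) ∧
    (M.isC v = false →
      (∃ w ∈ M.supp v, w ∉ M.Xseq F k) ∨ ∀ w ∈ M.supp v, w ∉ M.Xseq F (k+1)) := by
  set X := M.Xseq F k with hX
  have hXk1 : M.Xseq F (k+1) = M.Yseq F X (Fintype.card V) := rfl
  have hvY : v ∉ M.Yseq F X (Fintype.card V) := by rw [← hXk1]; exact hv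
  have hvY1 : v ∉ M.Yseq F X (Fintype.card V + 1) := by
    rw [← Yseq_card_stab M F X]; exact hvY
  have hvPre : v ∉ M.Pre (M.Yseq F X (Fintype.card V)) X := by
    intro hmem
    exact hvY1 (Set.mem_union_right _ hmem)
  rw [Pre, Set.mem_inter_iff, not_and_or] at hvPre
  have hvPre' : v ∉ ({u | M.isC u = true ∧ ∃ a v', M.trans u a = some v' ∧
        v' ∈ M.Yseq F X (Fintype.card V)} ∪
      {u | M.isC u = false ∧ M.supp u ⊆ X ∧
        (M.supp u ∩ M.Yseq F X (Fintype.card V)).Nonempty}) := by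
    rcases hvPre with h | h
    · exact absurd hvk h
    · exact h
  rw [Set.mem_union, not_or] at hvPre'
  obtain ⟨hA, hB⟩ := hvPre'
  refine ⟨fun hF => hvY (F_subset_Yseq M F X _ hF), ?_, ?_⟩
  · intro hC a v' htr hv'
    exact hA ⟨hC, a, v', htr, by rw [hXk1] at hv'; exact hv'⟩
  · intro hC
    rw [Set.mem_setOf_eq, not_and_or, not_and_or] at hB
    rcases hB with h | h | h
    · exact absurd hC h
    · left
      rw [Set.not_subset] at h
      obtain ⟨w, hw, hw'⟩ := h
      exact ⟨w, hw, hw'⟩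
    · right
      intro w hw hw'
      exact h ⟨w, hw, by rw [hXk1] at hw'; exact hw'⟩

lemma hreach_bounds [Fintype V] (M : OneMDP V A) (p : V → V → ℝ) (σ : List V → A)
    (F : Set V) [DecidablePred (· ∈ F)] (hp : M.ValidProbs p) :
    ∀ n h v, 0 ≤ M.hreach p σ F n h v ∧ M.hreach p σ F n h v ≤ 1 := by
  intro n
  induction n with
  | zero =>
    intro h v
    simp only [hreach]
    split <;> norm_num
  | succ n ih =>
    intro h v
    simp only [hreach]
    by_cases hF : v ∈ F
    · rw [if_pos hF]; norm_num
    rw [if_neg hF]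
    by_cases hC : M.isC v
    · rw [if_pos hC]
      cases htr : M.trans v (σ (h ++ [v])) with
      | none => simp
      | some v' => simpa using ih (h ++ [v]) v'
    · rw [if_neg hC]
      have hC' : M.isC v = false := by simpa using hC
      obtain ⟨hpos, hnn, hsum⟩ := hp v hC'
      constructor
      · apply Finset.sum_nonneg
        intro v' _
        exact mul_nonneg (hnn v') (ih (h ++ [v]) v').1
      · calc ∑ v' : V, p v v' * M.hreach p σ F n (h ++ [v]) v'
            ≤ ∑ v' : V, p v v' * 1 := by
              apply Finset.sum_le_sum
              intro v' _
              exact mul_le_mul_of_nonneg_left (ih (h ++ [v]) v').2 (hnn v')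
          _ = 1 := by simp [hsum]

lemma key_bound [Fintype V] (M : OneMDP V A) (F : Set V) [DecidablePred (· ∈ F)]
    (p : V → V → ℝ) (σ : List V → A) (hp : M.ValidProbs p)
    (ε : ℝ) (hε0 : 0 < ε) (hε1 : ε ≤ 1)
    (hεle : ∀ u w, M.isC u = false → w ∈ M.supp u → ε ≤ p u w) :
    ∀ k, ∀ v, v ∉ M.Xseq F k → ∀ n h, M.hreach p σ F n h v ≤ 1 - ε ^ k := by
  classical
  intro k
  induction k with
  | zero => intro v hv; exact absurd (Set.mem_univ v) hv
  | succ k IH =>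
    have hpowle : ε ^ (k+1) ≤ ε ^ k := pow_le_pow_of_le_one hε0.le hε1 (Nat.le_succ k)
    have hpow1 : ε ^ (k+1) ≤ 1 := pow_le_one₀ hε0.le hε1
    have hpownn : (0:ℝ) ≤ ε ^ k := pow_nonneg hε0.le k
    intro v hv n
    induction n generalizing v with
    | zero =>
      intro h
      by_cases hvk : v ∈ M.Xseq F k
      · obtain ⟨hF, -, -⟩ := not_mem_facts M F k v hvk hv
        simp only [hreach, if_neg hF]
        linarith
      · have := IH v hvk 0 h
        linarith
    | succ n ihn =>
      intro h
      by_cases hvk : v ∈ M.Xseq F k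
      · obtain ⟨hF, hCtrl, hProb⟩ := not_mem_facts M F k v hvk hv
        simp only [hreach, if_neg hF]
        by_cases hC : M.isC v
        · rw [if_pos hC]
          cases htr : M.trans v (σ (h ++ [v])) with
          | none => simp; linarith
          | some v' =>
            simp only [Option.elim]
            exact ihn v' (hCtrl hC (σ (h ++ [v])) v' htr) (h ++ [v])
        · rw [if_neg hC]
          have hC' : M.isC v = false := by simpa using hC
          obtain ⟨hpos, hnn, hsum⟩ := hp v hC'
          rcases hProb hC' with ⟨w, hwsupp, hwk⟩ | hall
          · -- some support successor outside X_k
            have hεw : ε ≤ p v w := hεle v w hC' hwsupp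
            calc ∑ v' : V, p v v' * M.hreach p σ F n (h ++ [v]) v'
                ≤ ∑ v' : V, (p v v' - if v' = w then p v w * ε ^ k else 0) := by
                  apply Finset.sum_le_sum
                  intro v' _
                  by_cases hvw : v' = w
                  · subst hvw
                    rw [if_pos rfl]
                    have hbd := IH v' hwk n (h ++ [v])
                    nlinarith [hnn v']
                  · rw [if_neg hvw]
                    have := (hreach_bounds M p σ F hp n (h ++ [v]) v').2
                    nlinarith [hnn v']
              _ = (∑ v' : V, p v v') - ∑ v' : V, (if v' = w then p v w * ε ^ k else 0) :=
                  Finset.sum_sub_distrib _ _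
              _ = 1 - p v w * ε ^ k := by
                  rw [hsum, Finset.sum_ite_eq' Finset.univ w, if_pos (Finset.mem_univ w)]
              _ ≤ 1 - ε ^ (k+1) := by
                  rw [pow_succ']
                  nlinarith
          · -- all support successors outside X_{k+1}
            calc ∑ v' : V, p v v' * M.hreach p σ F n (h ++ [v]) v'
                ≤ ∑ v' : V, p v v' * (1 - ε ^ (k+1)) := by
                  apply Finset.sum_le_sum
                  intro v' _
                  by_cases hsupp : v' ∈ M.supp v
                  · exact mul_le_mul_of_nonneg_left (ihn v' (hall v' hsupp) (h ++ [v])) (hnn v')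
                  · have hzero : p v v' = 0 :=
                      le_antisymm (not_lt.mp (fun hlt => hsupp ((hpos v').mp hlt))) (hnn v')
                    rw [hzero]
                    simp [(hreach_bounds M p σ F hp n (h ++ [v]) v').1]
              _ = 1 - ε ^ (k+1) := by rw [← Finset.sum_mul, hsum, one_mul]
      · have := IH v hvk (n+1) h
        linarith

end OneMDP
/-- **Completeness of the almost-sure algorithm.**
Every state outside the final fixed point `X*` is not almost-surely winning: for any
(history-dependent) controller strategy from `v ∉ X*` and any transition probabilities
consistent with the supports, the probability of reaching `F` is strictly less than 1. -/
theorem almost_sure_algorithm_complete {V A : Type} [Fintype V]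
    (M : OneMDP V A) (F : Set V) [DecidablePred (· ∈ F)]
    (v : V) (hv : v ∉ M.Xstar F) :
    ∀ σ : List V → A, ∀ p : V → V → ℝ, M.ValidProbs p →
      (⨆ n : ℕ, M.hreach p σ F n [] v) < 1 := by
  intro σ p hp
  classical
  set S : Finset (V × V) :=
    Finset.univ.filter (fun q => M.isC q.1 = false ∧ q.2 ∈ M.supp q.1) with hSdef
  set ε : ℝ := if hS : S.Nonempty then S.inf' hS (fun q => p q.1 q.2) else 1 with hεdef
  have hmemS : ∀ q : V × V, q ∈ S ↔ M.isC q.1 = false ∧ q.2 ∈ M.supp q.1 := by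
    intro q; simp [hSdef]
  have hple1 : ∀ u w, M.isC u = false → p u w ≤ 1 := by
    intro u w hu
    obtain ⟨-, hnn, hsum⟩ := hp u hu
    calc p u w ≤ ∑ v' : V, p u v' := Finset.single_le_sum (fun i _ => hnn i) (Finset.mem_univ w)
      _ = 1 := hsum
  have hε0 : 0 < ε := by
    rw [hεdef]
    split
    · rename_i hS
      obtain ⟨q, hq, hqeq⟩ := Finset.exists_mem_eq_inf' hS (fun q => p q.1 q.2)
      rw [hqeq]
      obtain ⟨hqC, hqsupp⟩ := (hmemS q).mp hq
      exact ((hp q.1 hqC).1 q.2).mpr hqsupp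
    · norm_num
  have hε1 : ε ≤ 1 := by
    rw [hεdef]
    split
    · rename_i hS
      obtain ⟨q, hq, hqeq⟩ := Finset.exists_mem_eq_inf' hS (fun q => p q.1 q.2)
      rw [hqeq]
      obtain ⟨hqC, _⟩ := (hmemS q).mp hq
      exact hple1 q.1 q.2 hqC
    · exact le_refl 1
  have hεle : ∀ u w, M.isC u = false → w ∈ M.supp u → ε ≤ p u w := by
    intro u w hu hw
    have hmem : (u, w) ∈ S := (hmemS (u, w)).mpr ⟨hu, hw⟩
    have hS : S.Nonempty := ⟨(u, w), hmem⟩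
    rw [hεdef, dif_pos hS]
    exact Finset.inf'_le _ hmem
  have hkey := OneMDP.key_bound M F p σ hp ε hε0 hε1 hεle (Fintype.card V) v hv
  have hsup : (⨆ n : ℕ, M.hreach p σ F n [] v) ≤ 1 - ε ^ Fintype.card V :=
    ciSup_le fun n => hkey n []
  have hpow : 0 < ε ^ Fintype.card V := pow_pos hε0 _
  linarith
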